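/- Let ν > 0 and let M be a random variable taking values in the positive integers with lim_{x→∞} (log P[M > x]) / x = −α for some α > 0. Define the random variable N by P[N > n] = E[ (1 − M e^{−(M−1)ν}(1 − e^{−ν}) / (1 − e^{−Mν}) )^n ] for n ∈ ℕ. Then lim_{n→∞} (log P[N > n]) / (log n) = −α/ν. -/

import Mathlib

open MeasureTheory Filter

namespace Stmt9Aux

noncomputable def Fc (ν : ℝ) (m : ℕ) : ℝ :=
  1 - (m : ℝ) * Real.exp (-((m : ℝ) - 1) * ν) * (1 - Real.exp (-ν)) /
      (1 - Real.exp (-(m : ℝ) * ν))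

lemma den_pos {ν : ℝ} (hν : 0 < ν) {m : ℕ} (hm : 1 ≤ m) :
    0 < 1 - Real.exp (-(m : ℝ) * ν) := by
  have h1 : (1:ℝ) ≤ m := by exact_mod_cast hm
  have : -(m:ℝ) * ν < 0 := by nlinarith
  have := Real.exp_lt_one_iff.2 this
  linarith

lemma num_le_den {ν : ℝ} (hν : 0 < ν) {m : ℕ} (hm : 1 ≤ m) :
    (m : ℝ) * Real.exp (-((m : ℝ) - 1) * ν) * (1 - Real.exp (-ν))
      ≤ 1 - Real.exp (-(m : ℝ) * ν) := by
  induction m, hm using Nat.le_induction with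
  | base => simp
  | succ m hm ih =>
    have h1 : (1:ℝ) ≤ m := by exact_mod_cast hm
    push_cast
    have e1 : Real.exp (-((m:ℝ) + 1 - 1) * ν) = Real.exp (-((m:ℝ) - 1) * ν) * Real.exp (-ν) := by
      rw [← Real.exp_add]; ring_nf
    have e2 : Real.exp (-((m:ℝ) + 1) * ν) = Real.exp (-(m:ℝ) * ν) * Real.exp (-ν) := by
      rw [← Real.exp_add]; ring_nf
    have key : Real.exp (-((m:ℝ)) * ν) = Real.exp (-((m:ℝ) - 1) * ν) * Real.exp (-ν) := by
      rw [← Real.exp_add]; ring_nf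
    have hexpν : Real.exp (-ν) < 1 := Real.exp_lt_one_iff.2 (by linarith)
    have hexpν0 : 0 < Real.exp (-ν) := Real.exp_pos _
    have hE0 : 0 < Real.exp (-((m:ℝ) - 1) * ν) := Real.exp_pos _
    rw [e1, e2] ; rw [key] at ih ⊢
    have fact : 0 ≤ (m:ℝ) * Real.exp (-((m:ℝ) - 1) * ν) * (1 - Real.exp (-ν)) * (1 - Real.exp (-ν)) := by
      have : 0 ≤ 1 - Real.exp (-ν) := by linarith
      positivity
    nlinarith [ih, fact]

lemma Fc_nonneg {ν : ℝ} (hν : 0 < ν) {m : ℕ} (hm : 1 ≤ m) : 0 ≤ Fc ν m := by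
  have hd := den_pos hν hm
  have hn := num_le_den hν hm
  unfold Fc
  rw [sub_nonneg, div_le_one hd]
  exact hn

lemma Fc_le {ν : ℝ} (hν : 0 < ν) {m : ℕ} (hm : 1 ≤ m) :
    Fc ν m ≤ 1 - (Real.exp ν - 1) * Real.exp (-ν * m) := by
  have hd := den_pos hν hm
  have h1 : (1:ℝ) ≤ m := by exact_mod_cast hm
  have hq : Real.exp (-ν) < 1 := Real.exp_lt_one_iff.2 (by linarith)
  have hq0 : 0 < Real.exp (-ν) := Real.exp_pos _
  have hE0 : 0 < Real.exp (-((m:ℝ) - 1) * ν) := Real.exp_pos _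
  have hqq : Real.exp ν * Real.exp (-ν) = 1 := by rw [← Real.exp_add]; simp
  have key : (Real.exp ν - 1) * Real.exp (-ν * m) = Real.exp (-((m:ℝ)-1) * ν) * (1 - Real.exp (-ν)) := by
    rw [show -((m:ℝ)-1)*ν = ν + (-ν * m) by ring, Real.exp_add]
    linear_combination Real.exp (-ν * (m:ℝ)) * hqq
  unfold Fc
  rw [key]
  have hnum_le : Real.exp (-((m:ℝ)-1) * ν) * (1 - Real.exp (-ν))
      ≤ (m:ℝ) * Real.exp (-((m:ℝ) - 1) * ν) * (1 - Real.exp (-ν)) / (1 - Real.exp (-(m : ℝ) * ν)) := by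
    rw [le_div_iff₀ hd]
    have hden_le1 : 1 - Real.exp (-(m:ℝ) * ν) ≤ 1 := by
      have := Real.exp_pos (-(m:ℝ) * ν); linarith
    nlinarith [mul_nonneg hE0.le (by linarith : (0:ℝ) ≤ 1 - Real.exp (-ν))]
  linarith

lemma Fc_ge {ν : ℝ} (hν : 0 < ν) {m : ℕ} (hm : 1 ≤ m) :
    1 - Real.exp ν * m * Real.exp (-ν * m) ≤ Fc ν m := by
  have hd := den_pos hν hm
  have h1 : (1:ℝ) ≤ m := by exact_mod_cast hm
  have hq : Real.exp (-ν) < 1 := Real.exp_lt_one_iff.2 (by linarith)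
  have hq0 : 0 < Real.exp (-ν) := Real.exp_pos _
  have hE0 : 0 < Real.exp (-((m:ℝ) - 1) * ν) := Real.exp_pos _
  have hden_ge : 1 - Real.exp (-ν) ≤ 1 - Real.exp (-(m:ℝ) * ν) := by
    have : Real.exp (-(m:ℝ) * ν) ≤ Real.exp (-ν) := Real.exp_le_exp.2 (by nlinarith)
    linarith
  have hnum0 : 0 ≤ (m:ℝ) * Real.exp (-((m:ℝ) - 1) * ν) * (1 - Real.exp (-ν)) := by
    have : 0 ≤ 1 - Real.exp (-ν) := by linarith
    positivity
  have hdiv : (m:ℝ) * Real.exp (-((m:ℝ) - 1) * ν) * (1 - Real.exp (-ν)) / (1 - Real.exp (-(m:ℝ) * ν))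
      ≤ (m:ℝ) * Real.exp (-((m:ℝ) - 1) * ν) * (1 - Real.exp (-ν)) / (1 - Real.exp (-ν)) :=
    div_le_div_of_nonneg_left hnum0 (by linarith) hden_ge
  have heq : (m:ℝ) * Real.exp (-((m:ℝ) - 1) * ν) * (1 - Real.exp (-ν)) / (1 - Real.exp (-ν))
      = Real.exp ν * m * Real.exp (-ν * m) := by
    rw [mul_div_assoc, div_self (by linarith : (1:ℝ) - Real.exp (-ν) ≠ 0), mul_one]
    rw [show -((m:ℝ)-1)*ν = ν + (-ν * m) by ring, Real.exp_add]
    ring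
  unfold Fc
  rw [heq] at hdiv
  linarith

/-- For every `0 < θ`, eventually in `m`, `Fc ν m ≥ 1 - exp (-(ν-θ) m)`. -/
lemma Fc_ge' {ν θ : ℝ} (hν : 0 < ν) (hθ : 0 < θ) :
    ∀ᶠ m : ℕ in atTop, 1 - Real.exp (-(ν - θ) * m) ≤ Fc ν m := by
  have hgr : Tendsto (fun m : ℕ => Real.exp (θ * m) / (θ * m)) atTop atTop := by
    have h1 : Tendsto (fun x : ℝ => Real.exp x / x) atTop atTop := by
      simpa using Real.tendsto_exp_div_pow_atTop 1
    have h2 : Tendsto (fun m : ℕ => θ * (m:ℝ)) atTop atTop :=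
      Tendsto.const_mul_atTop hθ tendsto_natCast_atTop_atTop
    exact h1.comp h2
  have hev : ∀ᶠ m : ℕ in atTop, Real.exp ν / θ ≤ Real.exp (θ * m) / (θ * m) :=
    hgr.eventually_ge_atTop _
  filter_upwards [hev, eventually_ge_atTop 1] with m hm hm1
  have h1 : (1:ℝ) ≤ m := by exact_mod_cast hm1
  have hθm : 0 < θ * (m:ℝ) := by positivity
  have hkey : Real.exp ν * m ≤ Real.exp (θ * m) := by
    rw [div_le_div_iff₀ (by positivity) hθm] at hm
    calc Real.exp ν * m = Real.exp ν * (θ * m) / θ := by field_simp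
    _ ≤ Real.exp (θ * m) * θ / θ := by
        apply div_le_div_of_nonneg_right _ hθ.le
        linarith [hm]
    _ = Real.exp (θ * m) := by field_simp
  refine le_trans ?_ (Fc_ge hν hm1)
  have : Real.exp ν * m * Real.exp (-ν * m) ≤ Real.exp (-(ν - θ) * m) := by
    have := Real.exp_pos (-ν * (m:ℝ))
    calc Real.exp ν * m * Real.exp (-ν * m) ≤ Real.exp (θ * m) * Real.exp (-ν * m) := by
          nlinarith [hkey]
    _ = Real.exp (-(ν - θ) * m) := by rw [← Real.exp_add]; ring_nf
  linarith

end Stmt9Aux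

open Stmt9Aux

set_option maxHeartbeats 2000000 in
/-- Theorem 5 (N-part, eq. (32)): in slotted ALOHA with a random number `M` of backlogged
users having an asymptotically exponential tail of rate `α`, the number of collision slots
`N` with `P[N > n] = E[(1 - M e^{-(M-1)ν}(1-e^{-ν})/(1-e^{-Mν}))^n]` has a power law tail
of index `α/ν`. -/
theorem stmt9 {Ω : Type*} {mΩ : MeasurableSpace Ω} (P : Measure Ω) [IsProbabilityMeasure P]
    (ν α : ℝ) (hν : 0 < ν) (hα : 0 < α)
    (M : Ω → ℕ) (hMm : Measurable M) (hMpos : ∀ ω, 1 ≤ M ω)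
    (htail : Tendsto (fun x : ℝ => Real.log (P {ω | (M ω : ℝ) > x}).toReal / x) atTop
      (nhds (-α))) :
    Tendsto (fun n : ℕ =>
        Real.log (∫ ω,
            (1 - (M ω : ℝ) * Real.exp (-((M ω : ℝ) - 1) * ν) * (1 - Real.exp (-ν)) /
              (1 - Real.exp (-(M ω : ℝ) * ν))) ^ n ∂P)
          / Real.log n) atTop (nhds (-(α / ν))) := by
  -- Notation
  set A : ℕ → ℝ := fun n => ∫ ω, (Fc ν (M ω)) ^ n ∂P with hA
  have hgoal : (fun n : ℕ =>
      Real.log (∫ ω,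
          (1 - (M ω : ℝ) * Real.exp (-((M ω : ℝ) - 1) * ν) * (1 - Real.exp (-ν)) /
            (1 - Real.exp (-(M ω : ℝ) * ν))) ^ n ∂P) / Real.log n)
      = fun n : ℕ => Real.log (A n) / Real.log n := rfl
  rw [hgoal]
  -- Basic measurability
  have hMR : Measurable (fun ω => (M ω : ℝ)) := measurable_from_nat.comp hMm
  have hF0 : ∀ ω, 0 ≤ Fc ν (M ω) := fun ω => Fc_nonneg hν (hMpos ω)
  have hF1 : ∀ ω, Fc ν (M ω) ≤ 1 := by
    intro ω
    have := Fc_le hν (hMpos ω)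
    have h1 : 1 < Real.exp ν := Real.one_lt_exp_iff.2 hν
    have h2 : 0 < Real.exp (-ν * (M ω : ℝ)) := Real.exp_pos _
    nlinarith
  have hmeas : ∀ n : ℕ, Measurable (fun ω => (Fc ν (M ω)) ^ n) := by
    intro n
    exact (measurable_from_nat (f := fun m : ℕ => (Fc ν m) ^ n)).comp hMm
  have hint : ∀ n : ℕ, Integrable (fun ω => (Fc ν (M ω)) ^ n) P := by
    intro n
    refine (integrable_const (1:ℝ)).mono' ((hmeas n).aestronglyMeasurable) ?_
    refine Filter.Eventually.of_forall fun ω => ?_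
    rw [Real.norm_of_nonneg (pow_nonneg (hF0 ω) n)]
    exact pow_le_one₀ (hF0 ω) (hF1 ω)
  -- Tail function
  set T : ℝ → ℝ := fun x => (P {ω | (M ω : ℝ) > x}).toReal with hT
  have hTle1 : ∀ x, T x ≤ 1 := by
    intro x
    have := prob_le_one (μ := P) (s := {ω | (M ω : ℝ) > x})
    simpa [hT] using ENNReal.toReal_le_of_le_ofReal zero_le_one (by simpa using this)
  -- Tail positivity
  have hTpos : ∀ x, 0 < T x := by
    intro x0
    by_contra hc
    push_neg at hc
    have hT0 : T x0 = 0 := le_antisymm hc ENNReal.toReal_nonneg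
    have hP0 : P {ω | (M ω : ℝ) > x0} = 0 := by
      have hne : P {ω | (M ω : ℝ) > x0} ≠ ⊤ := measure_ne_top _ _
      rw [hT] at hT0
      simpa [ENNReal.toReal_eq_zero_iff, hne] using hT0
    have hev : ∀ᶠ x in atTop, Real.log (T x) / x = 0 := by
      filter_upwards [eventually_ge_atTop x0] with x hx
      have : P {ω | (M ω : ℝ) > x} = 0 :=
        measure_mono_null (fun ω hω => lt_of_le_of_lt hx hω) hP0
      simp [hT, this]
    have h0 : Tendsto (fun _ : ℝ => (0:ℝ)) atTop (nhds (-α)) :=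
      Filter.Tendsto.congr' hev htail
    have := tendsto_nhds_unique h0 tendsto_const_nhds
    linarith
  -- sets
  have hsm : ∀ x : ℝ, MeasurableSet {ω | (M ω : ℝ) ≤ x} := fun x =>
    measurableSet_le hMR measurable_const
  have hscompl : ∀ x : ℝ, {ω | (M ω : ℝ) ≤ x}ᶜ = {ω | (M ω : ℝ) > x} := by
    intro x; ext ω; simp [not_le]
  -- Positivity of A n for every n
  have hApos : ∀ n : ℕ, 0 < A n := by
    obtain ⟨m0, hm0⟩ := eventually_atTop.1 (Fc_ge' hν (show (0:ℝ) < ν/2 by linarith))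
    intro n
    set z : ℕ := max m0 1 with hz
    set b : ℝ := 1 - Real.exp (-(ν - ν/2) * ((z:ℝ) + 1)) with hb
    have hbpos : 0 < b := by
      rw [hb]
      have : -(ν - ν/2) * ((z:ℝ) + 1) < 0 := by
        have : (0:ℝ) ≤ z := Nat.cast_nonneg z
        nlinarith
      have := Real.exp_lt_one_iff.2 this
      linarith
    have hble : ∀ ω, (M ω : ℝ) > (z:ℝ) → b ≤ Fc ν (M ω) := by
      intro ω hω
      have hMz : z + 1 ≤ M ω := by exact_mod_cast Nat.lt_of_lt_of_le (by exact_mod_cast hω) le_rfl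
      have hMz' : (z:ℝ) + 1 ≤ (M ω : ℝ) := by exact_mod_cast hMz
      have h1 := hm0 (M ω) (le_trans (le_max_left m0 1) (le_trans (Nat.le_succ z) hMz))
      have h2 : Real.exp (-(ν - ν/2) * (M ω : ℝ)) ≤ Real.exp (-(ν - ν/2) * ((z:ℝ) + 1)) := by
        apply Real.exp_le_exp.2
        nlinarith
      rw [hb]; linarith
    have hsub : ∫ ω in {ω | (M ω : ℝ) > (z:ℝ)}, b ^ n ∂P
        ≤ ∫ ω in {ω | (M ω : ℝ) > (z:ℝ)}, (Fc ν (M ω)) ^ n ∂P := by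
      apply setIntegral_mono_on
      · exact integrableOn_const (measure_ne_top P _)
      · exact (hint n).integrableOn
      · rw [← hscompl]; exact (hsm _).compl
      · intro ω hω
        exact pow_le_pow_left₀ hbpos.le (hble ω hω) n
    have hconst : ∫ ω in {ω | (M ω : ℝ) > (z:ℝ)}, b ^ n ∂P = T (z:ℝ) * b ^ n := by
      rw [setIntegral_const, smul_eq_mul]
      rfl
    have htot : ∫ ω in {ω | (M ω : ℝ) > (z:ℝ)}, (Fc ν (M ω)) ^ n ∂P ≤ A n := by
      apply setIntegral_le_integral (hint n)
      exact Filter.Eventually.of_forall fun ω => pow_nonneg (hF0 ω) n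
    have : 0 < T (z:ℝ) * b ^ n := by
      have := hTpos (z:ℝ); positivity
    linarith [hsub, htot, hconst.ge, hconst.le]
  -- UPPER bound
  have hL : Tendsto (fun n : ℕ => Real.log n) atTop atTop :=
    Real.tendsto_log_atTop.comp tendsto_natCast_atTop_atTop
  have hc : 0 < Real.exp ν - 1 := by
    have := Real.one_lt_exp_iff.2 hν; linarith
  have upper : ∀ ε : ℝ, 0 < ε → ∀ᶠ n : ℕ in atTop,
      Real.log (A n) / Real.log n ≤ -(α/ν) + ε := by
    intro ε hε
    -- choose θ
    obtain ⟨θ, hθ1, hθlt1, hθpos⟩ :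
        ∃ θ : ℝ, α/ν - ε/2 < (α-θ)*(1-θ)/ν ∧ θ < 1 ∧ 0 < θ := by
      have hcont : Tendsto (fun θ : ℝ => (α - θ) * (1 - θ) / ν)
          (nhdsWithin 0 (Set.Ioi 0)) (nhds (α/ν)) := by
        apply tendsto_nhdsWithin_of_tendsto_nhds
        have hca : ContinuousAt (fun θ : ℝ => (α - θ) * (1 - θ) / ν) 0 := by fun_prop
        simpa using hca.tendsto
      have h1 := hcont.eventually_const_lt (show α/ν - ε/2 < α/ν by linarith)
      have h2 : ∀ᶠ θ : ℝ in nhdsWithin 0 (Set.Ioi 0), θ < 1 :=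
        eventually_nhdsWithin_of_eventually_nhds (eventually_lt_nhds zero_lt_one)
      obtain ⟨θ, ⟨ha, hb⟩, hmem⟩ := ((h1.and h2).and self_mem_nhdsWithin).exists
      exact ⟨θ, ha, hb, hmem⟩
    set xf : ℕ → ℝ := fun n => (1-θ)/ν * Real.log n with hxf
    have hx_tendsto : Tendsto xf atTop atTop :=
      Tendsto.const_mul_atTop (div_pos (by linarith) hν) hL
    -- tail upper bound
    have htb : ∀ᶠ x : ℝ in atTop, T x ≤ Real.exp ((-α + θ) * x) := by
      have h1 := htail.eventually_lt_const (show -α < -α + θ by linarith)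
      filter_upwards [h1, eventually_gt_atTop 0] with x hx hx0
      rw [div_lt_iff₀ hx0] at hx
      have := (Real.log_lt_iff_lt_exp (hTpos x)).1 hx
      linarith
    -- comparison of the two error terms
    have hgr2 : Tendsto (fun n : ℕ => Real.exp (θ * Real.log n) / (θ * Real.log n)) atTop atTop := by
      have h1 : Tendsto (fun x : ℝ => Real.exp x / x) atTop atTop := by
        simpa using Real.tendsto_exp_div_pow_atTop 1
      exact h1.comp (Tendsto.const_mul_atTop hθpos hL)
    set B : ℝ := (α - θ) * ((1-θ)/ν) with hB
    have hcmp : ∀ᶠ n : ℕ in atTop,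
        (α - θ) * xf n ≤ (Real.exp ν - 1) * ((n:ℝ) * Real.exp (-ν * xf n)) := by
      have hev := hgr2.eventually_ge_atTop ((|B| + 1) / ((Real.exp ν - 1) * θ))
      filter_upwards [hev, hL.eventually_gt_atTop 0, eventually_ge_atTop 1] with n hn hLpos hn1
      have hn0 : (0:ℝ) < (n:ℝ) := by exact_mod_cast Nat.lt_of_lt_of_le Nat.zero_lt_one hn1
      have hexp_eq : (n:ℝ) * Real.exp (-ν * xf n) = Real.exp (θ * Real.log n) := by
        rw [← Real.exp_log hn0, ← Real.exp_add]
        congr 1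
        rw [hxf]; field_simp; simp only [Real.log_exp]; ring
      rw [hexp_eq]
      have hθL : 0 < θ * Real.log n := by positivity
      rw [div_le_div_iff₀ (by positivity) hθL] at hn
      have h2 : (|B| + 1) * Real.log n ≤ (Real.exp ν - 1) * Real.exp (θ * Real.log n) := by
        nlinarith
      have h3 : (α - θ) * xf n = B * Real.log n := by rw [hxf, hB]; ring
      rw [h3]
      have h4 : B * Real.log n ≤ (|B| + 1) * Real.log n := by
        have := le_abs_self B
        nlinarith
      linarith
    have hlog2 : ∀ᶠ n : ℕ in atTop, Real.log 2 / Real.log n < ε/2 :=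
      (tendsto_const_nhds.div_atTop hL).eventually_lt_const (by linarith)
    filter_upwards [hx_tendsto.eventually_ge_atTop 1, hx_tendsto.eventually htb, hcmp,
      hlog2, hL.eventually_gt_atTop 0] with n hx1 htbn hcmpn hlog2n hLpos
    set t : ℝ := (Real.exp ν - 1) * Real.exp (-ν * xf n) with ht
    have ht0 : 0 ≤ t := by positivity
    have ht1 : t ≤ 1 := by
      rw [ht]
      have h1 : Real.exp (-ν * xf n) ≤ Real.exp (-ν) := by
        apply Real.exp_le_exp.2; nlinarith
      have h2 : Real.exp (-ν) * Real.exp ν = 1 := by rw [← Real.exp_add]; simp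
      have h3 : 0 < Real.exp (-ν) := Real.exp_pos _
      nlinarith
    -- split the integral
    set s : Set Ω := {ω | (M ω : ℝ) ≤ xf n} with hs
    have hsplit := integral_add_compl (hsm (xf n)) (hint n)
    have bound1 : ∫ ω in s, (Fc ν (M ω)) ^ n ∂P ≤ (1 - t) ^ n := by
      have hmono : ∫ ω in s, (Fc ν (M ω)) ^ n ∂P ≤ ∫ _ in s, (1 - t) ^ n ∂P := by
        apply setIntegral_mono_on (hint n).integrableOn
          (integrableOn_const (measure_ne_top P _)) (hsm (xf n))
        intro ω hω
        apply pow_le_pow_left₀ (hF0 ω)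
        refine le_trans (Fc_le hν (hMpos ω)) ?_
        rw [ht]
        have : Real.exp (-ν * (M ω : ℝ)) ≥ Real.exp (-ν * xf n) := by
          apply Real.exp_le_exp.2
          have : (M ω : ℝ) ≤ xf n := hω
          nlinarith
        nlinarith
      rw [setIntegral_const, smul_eq_mul] at hmono
      change _ ≤ (P s).toReal * _ at hmono
      have hP1 : (P s).toReal ≤ 1 := by
        have := prob_le_one (μ := P) (s := s)
        simpa using ENNReal.toReal_le_of_le_ofReal zero_le_one (by simpa using this)
      have hpow0 : (0:ℝ) ≤ (1 - t) ^ n := pow_nonneg (by linarith) n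
      nlinarith
    have bound2 : ∫ ω in sᶜ, (Fc ν (M ω)) ^ n ∂P ≤ T (xf n) := by
      have hmono : ∫ ω in sᶜ, (Fc ν (M ω)) ^ n ∂P ≤ ∫ _ in sᶜ, (1:ℝ) ∂P := by
        apply setIntegral_mono_on (hint n).integrableOn
          (integrableOn_const (measure_ne_top P _)) (hsm (xf n)).compl
        intro ω _
        exact pow_le_one₀ (hF0 ω) (hF1 ω)
      rw [setIntegral_const, smul_eq_mul, mul_one] at hmono
      rw [hT, hs]
      rw [hscompl (xf n)] at hmono ⊢
      exact hmono
    have hA_le : A n ≤ (1 - t) ^ n + T (xf n) := by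
      rw [hA]
      calc (∫ ω, (Fc ν (M ω)) ^ n ∂P)
          = (∫ ω in s, (Fc ν (M ω)) ^ n ∂P) + ∫ ω in sᶜ, (Fc ν (M ω)) ^ n ∂P := hsplit.symm
        _ ≤ (1 - t) ^ n + T (xf n) := add_le_add bound1 bound2
    -- (1-t)^n ≤ exp(-n t) ≤ exp((-α+θ) xf n)
    have hexp1 : (1 - t) ^ n ≤ Real.exp (-((n:ℝ) * t)) := by
      have h1 : 1 - t ≤ Real.exp (-t) := by
        have := Real.add_one_le_exp (-t); linarith
      calc (1 - t) ^ n ≤ (Real.exp (-t)) ^ n := pow_le_pow_left₀ (by linarith) h1 n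
        _ = Real.exp ((n:ℝ) * (-t)) := (Real.exp_nat_mul _ n).symm
        _ = Real.exp (-((n:ℝ) * t)) := by ring_nf
    have hexp2 : Real.exp (-((n:ℝ) * t)) ≤ Real.exp ((-α + θ) * xf n) := by
      apply Real.exp_le_exp.2
      have : (α - θ) * xf n ≤ (n:ℝ) * t := by
        rw [ht]
        calc (α - θ) * xf n ≤ (Real.exp ν - 1) * ((n:ℝ) * Real.exp (-ν * xf n)) := hcmpn
          _ = (n:ℝ) * ((Real.exp ν - 1) * Real.exp (-ν * xf n)) := by ring
      linarith
    have hA_le2 : A n ≤ 2 * Real.exp ((-α + θ) * xf n) := by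
      have := hTle1 (xf n)
      calc A n ≤ (1 - t) ^ n + T (xf n) := hA_le
        _ ≤ Real.exp ((-α + θ) * xf n) + Real.exp ((-α + θ) * xf n) :=
            add_le_add (le_trans hexp1 hexp2) htbn
        _ = 2 * Real.exp ((-α + θ) * xf n) := by ring
    have hlogA : Real.log (A n) ≤ Real.log 2 + (-α + θ) * xf n := by
      have := Real.log_le_log (hApos n) hA_le2
      rwa [Real.log_mul two_ne_zero (Real.exp_ne_zero _), Real.log_exp] at this
    have hdiv : Real.log (A n) / Real.log n
        ≤ (Real.log 2 + (-α + θ) * xf n) / Real.log n :=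
      div_le_div_of_nonneg_right hlogA hLpos.le
    have hLne : Real.log n ≠ 0 := ne_of_gt hLpos
    have hsimp : (Real.log 2 + (-α + θ) * xf n) / Real.log n
        = Real.log 2 / Real.log n + (-α + θ) * ((1-θ)/ν) := by
      rw [hxf, add_div]
      congr 1
      rw [show (-α+θ)*((1-θ)/ν*Real.log n) = ((-α+θ)*((1-θ)/ν)) * Real.log n by ring,
        mul_div_assoc, div_self hLne, mul_one]
    have hfinal : (-α + θ) * ((1-θ)/ν) < -(α/ν) + ε/2 := by
      have heq : (-α + θ) * ((1-θ)/ν) = -((α-θ)*(1-θ)/ν) := by ring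
      rw [heq]
      linarith
    rw [hsimp] at hdiv
    linarith
  -- LOWER bound
  have lower : ∀ ε : ℝ, 0 < ε → ∀ᶠ n : ℕ in atTop,
      -(α/ν) - ε ≤ Real.log (A n) / Real.log n := by
    intro ε hε
    -- choose θ
    obtain ⟨θ, hθ1, hθlt, hθpos⟩ :
        ∃ θ : ℝ, (α+θ)*(1+θ)/(ν-θ) < α/ν + ε/2 ∧ θ < ν/2 ∧ 0 < θ := by
      have hca : ContinuousAt (fun θ : ℝ => (α + θ) * (1 + θ) / (ν - θ)) 0 := by
        apply ContinuousAt.div (by fun_prop) (by fun_prop)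
        simpa using hν.ne'
      have hcont : Tendsto (fun θ : ℝ => (α + θ) * (1 + θ) / (ν - θ))
          (nhdsWithin 0 (Set.Ioi 0)) (nhds (α/ν)) := by
        apply tendsto_nhdsWithin_of_tendsto_nhds
        simpa using hca.tendsto
      have h1 := hcont.eventually_lt_const (show α/ν < α/ν + ε/2 by linarith)
      have h2 : ∀ᶠ θ : ℝ in nhdsWithin 0 (Set.Ioi 0), θ < ν/2 :=
        eventually_nhdsWithin_of_eventually_nhds (eventually_lt_nhds (by linarith))
      obtain ⟨θ, ⟨ha, hb⟩, hmem⟩ := ((h1.and h2).and self_mem_nhdsWithin).exists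
      exact ⟨θ, ha, hb, hmem⟩
    have hνθ : 0 < ν - θ := by linarith
    set yf : ℕ → ℝ := fun n => (1+θ)/(ν-θ) * Real.log n with hyf
    have hy_tendsto : Tendsto yf atTop atTop :=
      Tendsto.const_mul_atTop (div_pos (by linarith) hνθ) hL
    -- pointwise lower bound on Fc, eventually in m
    obtain ⟨m0, hm0⟩ := eventually_atTop.1 (Fc_ge' hν hθpos)
    -- tail lower bound
    have htb2 : ∀ᶠ x : ℝ in atTop, Real.exp ((-α - θ) * x) ≤ T x := by
      have h1 := htail.eventually_const_lt (show -α - θ < -α by linarith)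
      filter_upwards [h1, eventually_gt_atTop 0] with x hx hx0
      rw [lt_div_iff₀ hx0] at hx
      have := (Real.lt_log_iff_exp_lt (hTpos x)).1 hx
      linarith
    -- smallness of the Bernoulli error term
    have hsmall : ∀ᶠ n : ℕ in atTop, Real.exp (-θ * Real.log n) ≤ 1/2 := by
      have h1 : Tendsto (fun n : ℕ => Real.exp (-θ * Real.log n)) atTop (nhds 0) :=
        Real.tendsto_exp_atBot.comp (Tendsto.const_mul_atTop_of_neg (by linarith) hL)
      exact (h1.eventually_lt_const (by norm_num : (0:ℝ) < 1/2)).mono fun n h => h.le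
    have hlog2 : ∀ᶠ n : ℕ in atTop, Real.log 2 / Real.log n < ε/2 :=
      (tendsto_const_nhds.div_atTop hL).eventually_lt_const (by linarith)
    filter_upwards [hy_tendsto.eventually_ge_atTop (m0 : ℝ),
      hy_tendsto.eventually_ge_atTop 0, hy_tendsto.eventually htb2, hsmall, hlog2,
      hL.eventually_gt_atTop 0, eventually_ge_atTop 1] with n hym0 hy0 htbn hsmalln hlog2n hLpos hn1
    have hn0 : (0:ℝ) < (n:ℝ) := by exact_mod_cast Nat.lt_of_lt_of_le Nat.zero_lt_one hn1
    have hLne : Real.log n ≠ 0 := ne_of_gt hLpos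
    set E : ℝ := Real.exp (-(ν-θ) * yf n) with hE
    set K : ℝ := 1 - E with hK
    have hEpos : 0 < E := Real.exp_pos _
    have hexpK : E ≤ 1 := by
      rw [hE]
      apply Real.exp_le_one_iff.2
      nlinarith
    have hK0 : 0 ≤ K := by rw [hK]; linarith
    -- pointwise bound on the tail event
    have hKF : ∀ ω, (M ω : ℝ) > yf n → K ^ n ≤ (Fc ν (M ω)) ^ n := by
      intro ω hω
      have hm0' : m0 ≤ M ω := by
        have h1 : (m0:ℝ) ≤ (M ω : ℝ) := le_of_lt (lt_of_le_of_lt hym0 hω)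
        exact_mod_cast h1
      have h1 := hm0 (M ω) hm0'
      have h2 : Real.exp (-(ν-θ) * (M ω : ℝ)) ≤ E := by
        rw [hE]
        apply Real.exp_le_exp.2
        nlinarith
      have hKle : K ≤ Fc ν (M ω) := by rw [hK]; linarith
      exact pow_le_pow_left₀ hK0 hKle n
    -- integral lower bound
    have hsub : ∫ _ in {ω | (M ω : ℝ) > yf n}, K ^ n ∂P
        ≤ ∫ ω in {ω | (M ω : ℝ) > yf n}, (Fc ν (M ω)) ^ n ∂P := by
      apply setIntegral_mono_on
        (integrableOn_const (measure_ne_top P _)) (hint n).integrableOn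
      · rw [← hscompl]; exact (hsm _).compl
      · exact hKF
    have hconst : ∫ _ in {ω | (M ω : ℝ) > yf n}, K ^ n ∂P
        = (P {ω | (M ω : ℝ) > yf n}).toReal * K ^ n := by
      rw [setIntegral_const, smul_eq_mul]
      rfl
    have htot : ∫ ω in {ω | (M ω : ℝ) > yf n}, (Fc ν (M ω)) ^ n ∂P ≤ A n := by
      apply setIntegral_le_integral (hint n)
      exact Filter.Eventually.of_forall fun ω => pow_nonneg (hF0 ω) n
    -- Bernoulli bound
    have hBer : 1 + (n:ℝ) * (-E) ≤ (1 + -E) ^ n :=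
      one_add_mul_le_pow (by nlinarith) n
    have hKeq : (1 + -E) = K := by rw [hK]; ring
    rw [hKeq] at hBer
    have hne : (n:ℝ) * E = Real.exp (-θ * Real.log n) := by
      rw [hE, ← Real.exp_log hn0, ← Real.exp_add]
      congr 1
      rw [hyf]
      field_simp
      simp only [Real.log_exp]
      ring
    have hKn_half : (1:ℝ)/2 ≤ K ^ n := by
      have : (n:ℝ) * E ≤ 1/2 := by rw [hne]; exact hsmalln
      nlinarith
    have hA_ge : Real.exp ((-α - θ) * yf n) * (1/2) ≤ A n := by
      have hTn : Real.exp ((-α - θ) * yf n) ≤ (P {ω | (M ω : ℝ) > yf n}).toReal := htbn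
      calc Real.exp ((-α - θ) * yf n) * (1/2)
          ≤ (P {ω | (M ω : ℝ) > yf n}).toReal * K ^ n :=
            mul_le_mul hTn hKn_half (by norm_num) ENNReal.toReal_nonneg
        _ = ∫ _ in {ω | (M ω : ℝ) > yf n}, K ^ n ∂P := hconst.symm
        _ ≤ ∫ ω in {ω | (M ω : ℝ) > yf n}, (Fc ν (M ω)) ^ n ∂P := hsub
        _ ≤ A n := htot
    have hlogA : (-α - θ) * yf n - Real.log 2 ≤ Real.log (A n) := by
      have h := Real.log_le_log (by positivity) hA_ge
      rw [Real.log_mul (Real.exp_ne_zero _) (by norm_num), Real.log_exp,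
        one_div, Real.log_inv] at h
      linarith
    have hdiv : ((-α - θ) * yf n - Real.log 2) / Real.log n
        ≤ Real.log (A n) / Real.log n :=
      div_le_div_of_nonneg_right hlogA hLpos.le
    have hsimp : ((-α - θ) * yf n - Real.log 2) / Real.log n
        = (-α - θ) * ((1+θ)/(ν-θ)) - Real.log 2 / Real.log n := by
      rw [hyf, sub_div]
      congr 1
      rw [show (-α - θ)*((1+θ)/(ν-θ)*Real.log n) = ((-α - θ)*((1+θ)/(ν-θ))) * Real.log n by ring,
        mul_div_assoc, div_self hLne, mul_one]
    rw [hsimp] at hdiv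
    have hfinal : -(α/ν) - ε ≤ (-α - θ) * ((1+θ)/(ν-θ)) - Real.log 2 / Real.log n := by
      have heq : (-α - θ) * ((1+θ)/(ν-θ)) = -((α+θ)*(1+θ)/(ν-θ)) := by ring
      rw [heq]
      linarith
    linarith
  -- Conclusion
  rw [tendsto_order]
  constructor
  · intro b hb
    have hε : 0 < (-(α/ν) - b) / 2 := by linarith
    filter_upwards [lower _ hε] with n hn
    have : -(α/ν) - (-(α/ν) - b)/2 > b := by linarith
    linarith
  · intro b hb
    have hε : 0 < (b - -(α/ν)) / 2 := by linarith
    filter_upwards [upper _ hε] with n hn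
    have : -(α/ν) + (b - -(α/ν))/2 < b := by linarith
    linarith
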